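/- arXiv:1108.0471 — 4 statements merged into one kernel-verified Lean document; each statement's English description precedes it below -/
import Mathlib

section
/- In PCL, the formula (b ↠ a) ∧ (a ↠ b) → a ∧ b is a theorem, where ↠ denotes contractual implication. -/
/-- Formulae of the contract logic PCL: intuitionistic propositional logic
extended with contractual implication ↠ and an indexed lax modality `says`. -/
inductive PCL (P At : Type) where
  | atom : At → PCL P At
  | top : PCL P At
  | bot : PCL P At
  | and : PCL P At → PCL P At → PCL P At
  | or : PCL P At → PCL P At → PCL P At
  | imp : PCL P At → PCL P At → PCL P At
  | cimp : PCL P At → PCL P At → PCL P At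
  | says : P → PCL P At → PCL P At

/-- Hilbert-style provability for PCL: intuitionistic propositional axioms,
modus ponens, the contractual-implication axioms
⊤↠⊤, (φ↠φ)→φ, (φ'→φ)→(φ↠ψ)→(ψ→ψ')→(φ'↠ψ'),
and the lax `says` axioms. -/
inductive Prov {P At : Type} (Γ : Set (PCL P At)) : PCL P At → Prop where
  | ax {φ} : φ ∈ Γ → Prov Γ φ
  | mp {φ ψ} : Prov Γ (.imp φ ψ) → Prov Γ φ → Prov Γ ψ
  | k (φ ψ) : Prov Γ (.imp φ (.imp ψ φ))
  | s (φ ψ χ) : Prov Γ (.imp (.imp φ (.imp ψ χ)) (.imp (.imp φ ψ) (.imp φ χ)))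
  | andI (φ ψ) : Prov Γ (.imp φ (.imp ψ (.and φ ψ)))
  | andE1 (φ ψ) : Prov Γ (.imp (.and φ ψ) φ)
  | andE2 (φ ψ) : Prov Γ (.imp (.and φ ψ) ψ)
  | orI1 (φ ψ) : Prov Γ (.imp φ (.or φ ψ))
  | orI2 (φ ψ) : Prov Γ (.imp ψ (.or φ ψ))
  | orE (φ ψ χ) : Prov Γ (.imp (.imp φ χ) (.imp (.imp ψ χ) (.imp (.or φ ψ) χ)))
  | topI : Prov Γ .top
  | botE (φ) : Prov Γ (.imp .bot φ)
  | ctop : Prov Γ (.cimp .top .top)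
  | cfix (φ) : Prov Γ (.imp (.cimp φ φ) φ)
  | cmono (φ φ' ψ ψ') :
      Prov Γ (.imp (.imp φ' φ) (.imp (.cimp φ ψ) (.imp (.imp ψ ψ') (.cimp φ' ψ'))))
  | saysI (A φ) : Prov Γ (.imp φ (.says A φ))
  | saysIdem (A φ) : Prov Γ (.imp (.says A (.says A φ)) (.says A φ))
  | saysMono (A φ ψ) : Prov Γ (.imp (.imp φ ψ) (.imp (.says A φ) (.says A ψ)))

namespace PCLAux

variable {P At : Type}

theorem Prov.weaken {Γ Γ' : Set (PCL P At)} (h : Γ ⊆ Γ') {φ} :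
    Prov Γ φ → Prov Γ' φ := by
  intro hp
  induction hp with
  | ax h' => exact .ax (h h')
  | mp _ _ ih1 ih2 => exact .mp ih1 ih2
  | k => exact .k _ _
  | s => exact .s _ _ _
  | andI => exact .andI _ _
  | andE1 => exact .andE1 _ _
  | andE2 => exact .andE2 _ _
  | orI1 => exact .orI1 _ _
  | orI2 => exact .orI2 _ _
  | orE => exact .orE _ _ _
  | topI => exact .topI
  | botE => exact .botE _
  | ctop => exact .ctop
  | cfix => exact .cfix _
  | cmono => exact .cmono _ _ _ _
  | saysI => exact .saysI _ _
  | saysIdem => exact .saysIdem _ _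
  | saysMono => exact .saysMono _ _ _

theorem Prov.id (Γ : Set (PCL P At)) (φ : PCL P At) : Prov Γ (.imp φ φ) :=
  .mp (.mp (.s φ (.imp φ φ) φ) (.k φ (.imp φ φ))) (.k φ φ)

/-- Deduction theorem. -/
theorem deduction {Γ : Set (PCL P At)} {φ ψ : PCL P At}
    (h : Prov (insert φ Γ) ψ) : Prov Γ (.imp φ ψ) := by
  induction h with
  | @ax χ h' =>
      rcases h' with h' | h'
      · exact h' ▸ Prov.id Γ φ
      · exact .mp (.k _ _) (.ax h')
  | @mp α β _ _ ih1 ih2 => exact .mp (.mp (.s φ α β) ih1) ih2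
  | k => exact .mp (.k _ _) (.k _ _)
  | s => exact .mp (.k _ _) (.s _ _ _)
  | andI => exact .mp (.k _ _) (.andI _ _)
  | andE1 => exact .mp (.k _ _) (.andE1 _ _)
  | andE2 => exact .mp (.k _ _) (.andE2 _ _)
  | orI1 => exact .mp (.k _ _) (.orI1 _ _)
  | orI2 => exact .mp (.k _ _) (.orI2 _ _)
  | orE => exact .mp (.k _ _) (.orE _ _ _)
  | topI => exact .mp (.k _ _) .topI
  | botE => exact .mp (.k _ _) (.botE _)
  | ctop => exact .mp (.k _ _) .ctop
  | cfix => exact .mp (.k _ _) (.cfix _)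
  | cmono => exact .mp (.k _ _) (.cmono _ _ _ _)
  | saysI => exact .mp (.k _ _) (.saysI _ _)
  | saysIdem => exact .mp (.k _ _) (.saysIdem _ _)
  | saysMono => exact .mp (.k _ _) (.saysMono _ _ _)

/-- From φ ↠ ψ and φ, derive ψ. -/
theorem cimp_mp {Γ : Set (PCL P At)} {φ ψ : PCL P At}
    (h1 : Prov Γ (.cimp φ ψ)) (h2 : Prov Γ φ) : Prov Γ ψ := by
  have hpf : Prov Γ (.imp ψ φ) := .mp (.k φ ψ) h2
  have : Prov Γ (.cimp ψ ψ) :=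
    .mp (.mp (.mp (.cmono φ ψ ψ ψ) hpf) h1) (Prov.id Γ ψ)
  exact .mp (.cfix ψ) this

end PCLAux

open PCLAux in
/-- ⊢ (b ↠ a) ∧ (a ↠ b) → a ∧ b is a theorem of PCL. -/
theorem stmt5 {P At : Type} (a b : PCL P At) :
    Prov (∅ : Set (PCL P At))
      (.imp (.and (.cimp b a) (.cimp a b)) (.and a b)) := by
  apply deduction
  set Γ : Set (PCL P At) := insert (.and (.cimp b a) (.cimp a b)) ∅ with hΓ
  have hba : Prov Γ (.cimp b a) :=
    .mp (.andE1 (.cimp b a) (.cimp a b)) (.ax (Set.mem_insert _ _))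
  have hab : Prov Γ (.cimp a b) :=
    .mp (.andE2 (.cimp b a) (.cimp a b)) (.ax (Set.mem_insert _ _))
  have sub : Γ ⊆ insert a Γ := Set.subset_insert _ _
  have sub' : Γ ⊆ insert b Γ := Set.subset_insert _ _
  -- Γ ⊢ a → b
  have hatob : Prov Γ (.imp a b) := by
    apply deduction
    exact cimp_mp (Prov.weaken sub hab) (.ax (Set.mem_insert _ _))
  -- Γ ⊢ b → a
  have hbtoa : Prov Γ (.imp b a) := by
    apply deduction
    exact cimp_mp (Prov.weaken sub' hba) (.ax (Set.mem_insert _ _))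
  have ha : Prov Γ a := .mp (.cfix a) (.mp (.mp (.mp (.cmono b a a a) hatob) hba) (Prov.id Γ a))
  have hb : Prov Γ b := .mp (.cfix b) (.mp (.mp (.mp (.cmono a b b b) hbtoa) hab) (Prov.id Γ b))
  exact .mp (.mp (.andI a b) ha) hb
end

section
/- In PCL, contractual implication is stronger than intuitionistic implication: ⊢ (φ ↠ ψ) → (φ → ψ). -/
lemma Prov.id {P At : Type} (Γ : Set (PCL P At)) (φ : PCL P At) :
    Prov Γ (.imp φ φ) :=
  (Prov.s φ (.imp φ φ) φ |>.mp (Prov.k φ (.imp φ φ))).mp (Prov.k φ φ)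

/-- Deduction theorem for the Hilbert system. -/
lemma Prov.ded {P At : Type} {Γ : Set (PCL P At)} {φ ψ : PCL P At}
    (h : Prov (insert φ Γ) ψ) : Prov Γ (.imp φ ψ) := by
  induction h with
  | ax hmem =>
    rcases hmem with rfl | hmem
    · exact Prov.id Γ _
    · exact (Prov.k _ φ).mp (Prov.ax hmem)
  | mp _ _ ih1 ih2 => exact ((Prov.s φ _ _).mp ih1).mp ih2
  | k a b => exact (Prov.k _ φ).mp (Prov.k a b)
  | s a b c => exact (Prov.k _ φ).mp (Prov.s a b c)
  | andI a b => exact (Prov.k _ φ).mp (Prov.andI a b)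
  | andE1 a b => exact (Prov.k _ φ).mp (Prov.andE1 a b)
  | andE2 a b => exact (Prov.k _ φ).mp (Prov.andE2 a b)
  | orI1 a b => exact (Prov.k _ φ).mp (Prov.orI1 a b)
  | orI2 a b => exact (Prov.k _ φ).mp (Prov.orI2 a b)
  | orE a b c => exact (Prov.k _ φ).mp (Prov.orE a b c)
  | topI => exact (Prov.k _ φ).mp Prov.topI
  | botE a => exact (Prov.k _ φ).mp (Prov.botE a)
  | ctop => exact (Prov.k _ φ).mp Prov.ctop
  | cfix a => exact (Prov.k _ φ).mp (Prov.cfix a)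
  | cmono a b c d => exact (Prov.k _ φ).mp (Prov.cmono a b c d)
  | saysI A a => exact (Prov.k _ φ).mp (Prov.saysI A a)
  | saysIdem A a => exact (Prov.k _ φ).mp (Prov.saysIdem A a)
  | saysMono A a b => exact (Prov.k _ φ).mp (Prov.saysMono A a b)

/-- contractual implication is stronger than intuitionistic
implication: ⊢ (φ ↠ ψ) → (φ → ψ). -/
theorem stmt6 {P At : Type} (φ ψ : PCL P At) :
    Prov (∅ : Set (PCL P At)) (.imp (.cimp φ ψ) (.imp φ ψ)) := by
  apply Prov.ded
  apply Prov.ded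
  have hφ : Prov (insert φ (insert (.cimp φ ψ) (∅ : Set (PCL P At)))) φ :=
    Prov.ax (by simp)
  have hc : Prov (insert φ (insert (.cimp φ ψ) (∅ : Set (PCL P At)))) (.cimp φ ψ) :=
    Prov.ax (by simp)
  have hψφ := (Prov.k φ ψ).mp hφ
  have hcc := (((Prov.cmono φ ψ ψ ψ).mp hψφ).mp hc).mp (Prov.id _ ψ)
  exact (Prov.cfix ψ).mp hcc
end

section
/- For the asymmetric pair c_A = A says ((B says b) → a) and c_B = B says ((A says a) ↠ b), it holds that c_A ∧ c_B ⊢ (A says a) ∧ (B says b). -/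
theorem Prov.weaken {P At : Type} {Γ Γ' : Set (PCL P At)} {φ : PCL P At}
    (h : Γ ⊆ Γ') (hp : Prov Γ φ) : Prov Γ' φ := by
  induction hp with
  | ax hm => exact .ax (h hm)
  | mp _ _ ih1 ih2 => exact .mp ih1 ih2
  | k φ ψ => exact .k φ ψ
  | s φ ψ χ => exact .s φ ψ χ
  | andI φ ψ => exact .andI φ ψ
  | andE1 φ ψ => exact .andE1 φ ψ
  | andE2 φ ψ => exact .andE2 φ ψ
  | orI1 φ ψ => exact .orI1 φ ψ
  | orI2 φ ψ => exact .orI2 φ ψ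
  | orE φ ψ χ => exact .orE φ ψ χ
  | topI => exact .topI
  | botE φ => exact .botE φ
  | ctop => exact .ctop
  | cfix φ => exact .cfix φ
  | cmono φ φ' ψ ψ' => exact .cmono φ φ' ψ ψ'
  | saysI A φ => exact .saysI A φ
  | saysIdem A φ => exact .saysIdem A φ
  | saysMono A φ ψ => exact .saysMono A φ ψ

theorem provId {P At : Type} {Γ : Set (PCL P At)} (φ : PCL P At) :
    Prov Γ (.imp φ φ) :=
  ((Prov.s φ (.imp φ φ) φ).mp (.k _ _)).mp (.k _ _)

theorem deduction {P At : Type} {Γ : Set (PCL P At)} {χ φ : PCL P At}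
    (h : Prov (insert χ Γ) φ) : Prov Γ (.imp χ φ) := by
  induction h with
  | ax hm =>
    rcases Set.mem_insert_iff.mp hm with rfl | hm
    · exact provId _
    · exact (Prov.k _ _).mp (.ax hm)
  | mp _ _ ih1 ih2 => exact ((Prov.s _ _ _).mp ih1).mp ih2
  | k φ ψ => exact (Prov.k _ χ).mp (.k φ ψ)
  | s φ ψ χ' => exact (Prov.k _ χ).mp (.s φ ψ χ')
  | andI φ ψ => exact (Prov.k _ χ).mp (.andI φ ψ)
  | andE1 φ ψ => exact (Prov.k _ χ).mp (.andE1 φ ψ)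
  | andE2 φ ψ => exact (Prov.k _ χ).mp (.andE2 φ ψ)
  | orI1 φ ψ => exact (Prov.k _ χ).mp (.orI1 φ ψ)
  | orI2 φ ψ => exact (Prov.k _ χ).mp (.orI2 φ ψ)
  | orE φ ψ χ' => exact (Prov.k _ χ).mp (.orE φ ψ χ')
  | topI => exact (Prov.k _ χ).mp .topI
  | botE φ => exact (Prov.k _ χ).mp (.botE φ)
  | ctop => exact (Prov.k _ χ).mp .ctop
  | cfix φ => exact (Prov.k _ χ).mp (.cfix φ)
  | cmono φ φ' ψ ψ' => exact (Prov.k _ χ).mp (.cmono φ φ' ψ ψ')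
  | saysI A φ => exact (Prov.k _ χ).mp (.saysI A φ)
  | saysIdem A φ => exact (Prov.k _ χ).mp (.saysIdem A φ)
  | saysMono A φ ψ => exact (Prov.k _ χ).mp (.saysMono A φ ψ)

/-- Object-level K for the `says` modality. -/
theorem saysK {P At : Type} {Γ : Set (PCL P At)} (A : P) (φ ψ : PCL P At) :
    Prov Γ (.imp (.says A (.imp φ ψ)) (.imp (.says A φ) (.says A ψ))) := by
  apply deduction
  apply deduction
  have h1 : Prov (insert (PCL.says A φ) (insert (PCL.says A (.imp φ ψ)) Γ))
      (PCL.says A (.imp φ ψ)) := .ax (Set.mem_insert_of_mem _ (Set.mem_insert _ _))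
  have h2 : Prov (insert (PCL.says A φ) (insert (PCL.says A (.imp φ ψ)) Γ))
      (PCL.says A φ) := .ax (Set.mem_insert _ _)
  have g : Prov (insert (PCL.says A φ) (insert (PCL.says A (.imp φ ψ)) Γ))
      (.imp (.imp φ ψ) (.says A ψ)) :=
    deduction (((Prov.saysMono A φ ψ).mp (.ax (Set.mem_insert _ _))).mp
      (h2.weaken (Set.subset_insert _ _)))
  exact (Prov.saysIdem A ψ).mp (((Prov.saysMono A _ _).mp g).mp h1)

/-- for the asymmetric pair c_A = A says ((B says b) → a) and
c_B = B says ((A says a) ↠ b), c_A ∧ c_B ⊢ (A says a) ∧ (B says b). -/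

theorem stmt12 {P At : Type} (A B : P) (a b : At) :
    Prov ({PCL.and (.says A (.imp (.says B (.atom b)) (.atom a)))
                   (.says B (.cimp (.says A (.atom a)) (.atom b)))} : Set (PCL P At))
      (.and (.says A (.atom a)) (.says B (.atom b))) := by
  set al : PCL P At := .says A (.atom a) with hal
  set be : PCL P At := .says B (.atom b) with hbe
  set fA : PCL P At := .imp be (.atom a) with hfA
  set fB : PCL P At := .cimp al (.atom b) with hfB
  set G : Set (PCL P At) := {PCL.and (.says A fA) (.says B fB)} with hG
  have hconj : Prov G (.and (.says A fA) (.says B fB)) := .ax rfl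
  have hcA : Prov G (.says A fA) := (Prov.andE1 _ _).mp hconj
  have hcB : Prov G (.says B fB) := (Prov.andE2 _ _).mp hconj
  -- β → α
  have hba : Prov G (.imp be al) := by
    apply deduction
    have hb : Prov (insert be G) be := .ax (Set.mem_insert _ _)
    have hAb : Prov (insert be G) (.says A be) := (Prov.saysI A be).mp hb
    have hcA' : Prov (insert be G) (.says A fA) := hcA.weaken (Set.subset_insert _ _)
    exact ((saysK A be (.atom a)).mp hcA').mp hAb
  have hbB : Prov G (.imp (.atom b) be) := Prov.saysI B (.atom b)
  -- fB → β
  have g : Prov G (.imp fB be) := by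
    apply deduction
    have hfb : Prov (insert fB G) fB := .ax (Set.mem_insert _ _)
    have hcm : Prov (insert fB G) (.cimp be be) :=
      ((((Prov.cmono al be (.atom b) be).mp
        (hba.weaken (Set.subset_insert _ _))).mp hfb).mp
        (hbB.weaken (Set.subset_insert _ _)))
    exact (Prov.cfix be).mp hcm
  have hBb : Prov G be := (Prov.saysIdem B (.atom b)).mp
    (((Prov.saysMono B fB be).mp g).mp hcB)
  have hAa : Prov G al := hba.mp hBb
  exact ((Prov.andI al be).mp hAa).mp hBb
end

section
/- For the circular intuitionistic pair c_A = A says ((B says b) → a) and c_B = B says ((A says a) → b), the entailment c_A ∧ c_B ⊢ (A says a) ∧ (B says b) does NOT hold (it is not derivable in PCL). -/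
/-- Trivial countermodel evaluation: atoms are false, `says` is identity,
`↠` is second projection. -/
def pclEval {P At : Type} : PCL P At → Prop
  | .atom _ => False
  | .top => True
  | .bot => False
  | .and φ ψ => pclEval φ ∧ pclEval ψ
  | .or φ ψ => pclEval φ ∨ pclEval ψ
  | .imp φ ψ => pclEval φ → pclEval ψ
  | .cimp _ ψ => pclEval ψ
  | .says _ φ => pclEval φ

/-- for the circular intuitionistic pair
c_A = A says ((B says b) → a) and c_B = B says ((A says a) → b),
with a ≠ b and A ≠ B, the entailment c_A ∧ c_B ⊢ (A says a) ∧ (B says b)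
does NOT hold in PCL. -/
theorem stmt13 {P At : Type} (A B : P) (a b : At) (hP : A ≠ B) (hAt : a ≠ b) :
    ¬ Prov ({PCL.and (.says A (.imp (.says B (.atom b)) (.atom a)))
                     (.says B (.imp (.says A (.atom a)) (.atom b)))} : Set (PCL P At))
        (.and (.says A (.atom a)) (.says B (.atom b))) := by
  intro h
  have key : ∀ φ, Prov ({PCL.and (.says A (.imp (.says B (.atom b)) (.atom a)))
                     (.says B (.imp (.says A (.atom a)) (.atom b)))} : Set (PCL P At)) φ →
      pclEval φ := by
    intro φ hφ
    induction hφ with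
    | ax hmem =>
        simp only [Set.mem_singleton_iff] at hmem
        subst hmem
        exact ⟨fun h => h, fun h => h⟩
    | mp _ _ ih1 ih2 => exact ih1 ih2
    | k φ ψ => exact fun h _ => h
    | s φ ψ χ => exact fun h1 h2 h3 => h1 h3 (h2 h3)
    | andI φ ψ => exact fun h1 h2 => ⟨h1, h2⟩
    | andE1 φ ψ => exact fun h => h.1
    | andE2 φ ψ => exact fun h => h.2
    | orI1 φ ψ => exact Or.inl
    | orI2 φ ψ => exact Or.inr
    | orE φ ψ χ => exact fun h1 h2 h => h.elim h1 h2
    | topI => exact trivial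
    | botE φ => exact False.elim
    | ctop => exact trivial
    | cfix φ => exact id
    | cmono φ φ' ψ ψ' => exact fun _ h2 h3 => h3 h2
    | saysI A φ => exact id
    | saysIdem A φ => exact id
    | saysMono A φ ψ => exact fun h => h
  exact (key _ h).1
end
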